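/- arXiv:2211.05005 — 2 statements merged into one kernel-verified Lean document; each statement's English description precedes it below -/
import Mathlib

section
/- Let X be a set, let Π : X → L(ℂ^d) be a fixed function taking values in orthogonal projections on ℂ^d, let S be a set of d×d unitary matrices, and let C_Π = {Π_U : U ∈ S} where Π_U(x) = U Π(x) U†. Then for every n ≥ 1 and every ε > 0, γ_{1,∞}(n, ε, C_Π) ≤ N_in(ε/2, S, d_op), where d_op is the distance induced by the operator norm. -/
open scoped BigOperators ComplexOrder Matrix Classical
open Matrix

/-- Operator (spectral) norm of a matrix (the Schatten `∞`-norm). -/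
noncomputable def opNorm {m : Type*} [Fintype m] [DecidableEq m]
    (M : Matrix m m ℂ) : ℝ :=
  ‖Matrix.toEuclideanCLM (𝕜 := ℂ) M‖

/-- An orthogonal projection: Hermitian and idempotent. -/
def IsProjectionMatrix {m : Type*} [Fintype m] [DecidableEq m]
    (P : Matrix m m ℂ) : Prop :=
  P.IsHermitian ∧ P * P = P

/-- The internal covering number `N_in(ε, B, dist)`: the smallest cardinality of a
finite `A ⊆ B` such that every `b ∈ B` is within pseudodistance `ε` of some
`a ∈ A` (with value `⊤ : ℕ∞` if no finite internal `ε`-net exists). -/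
noncomputable def coveringNumber {α : Type*} (ε : ℝ) (B : Set α) (dist : α → α → ℝ) :
    ℕ∞ :=
  ⨅ (A : Finset α) (_ : ↑A ⊆ B ∧ ∀ b ∈ B, ∃ a ∈ A, dist a b ≤ ε), (A.card : ℕ∞)

/-- The operator-class covering number `γ_{1,q}(n, ε, C)`: the supremum over samples
`x̄ ∈ X^n` of the internal `ε`-covering number of `C` in the pseudometric
`(g₁, g₂) ↦ (1/n) ∑ᵢ ‖g₁(xᵢ) - g₂(xᵢ)‖_q`; the Schatten `q`-norm is passed as the
argument `nrm` (`q = ∞` corresponds to `nrm = opNorm`). -/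
noncomputable def gammaCov {X : Type*} {d : ℕ} (n : ℕ) (ε : ℝ)
    (C : Set (X → Matrix (Fin d) (Fin d) ℂ)) (nrm : Matrix (Fin d) (Fin d) ℂ → ℝ) :
    ℕ∞ :=
  ⨆ xbar : Fin n → X,
    coveringNumber ε C (fun g₁ g₂ => (1 / (n : ℝ)) * ∑ i, nrm (g₁ (xbar i) - g₂ (xbar i)))

section Aux

open scoped Matrix.Norms.L2Operator

private lemma opNorm_eq_l2norm {m : Type*} [Fintype m] [DecidableEq m]
    (M : Matrix m m ℂ) : opNorm M = ‖M‖ := rfl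

private lemma l2norm_one_le (d : ℕ) : ‖(1 : Matrix (Fin d) (Fin d) ℂ)‖ ≤ 1 := by
  rw [Matrix.cstar_norm_def, _root_.map_one]
  exact ContinuousLinearMap.norm_id_le

/-- Key perturbation bound: conjugating a projection by two unitaries differs in
operator norm by at most twice the operator-norm distance of the unitaries. -/
private lemma opNorm_conj_sub_conj_le {d : ℕ} (U V Q : Matrix (Fin d) (Fin d) ℂ)
    (hU : U ∈ Matrix.unitaryGroup (Fin d) ℂ) (hV : V ∈ Matrix.unitaryGroup (Fin d) ℂ)
    (hQ : IsProjectionMatrix Q) :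
    opNorm (U * Q * Uᴴ - V * Q * Vᴴ) ≤ 2 * opNorm (U - V) := by
  rw [opNorm_eq_l2norm, opNorm_eq_l2norm]
  have hU1 : Uᴴ * U = 1 := hU.1
  have hV1 : Vᴴ * V = 1 := hV.1
  have hnU : ‖U‖ ≤ 1 := by
    have h1 : ‖U‖ * ‖U‖ ≤ 1 := by
      rw [← Matrix.l2_opNorm_conjTranspose_mul_self, hU1]; exact l2norm_one_le d
    nlinarith [norm_nonneg U]
  have hnV : ‖V‖ ≤ 1 := by
    have h1 : ‖V‖ * ‖V‖ ≤ 1 := by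
      rw [← Matrix.l2_opNorm_conjTranspose_mul_self, hV1]; exact l2norm_one_le d
    nlinarith [norm_nonneg V]
  have hnQ : ‖Q‖ ≤ 1 := by
    have h1 : ‖Q‖ * ‖Q‖ = ‖Q‖ := by
      rw [← Matrix.l2_opNorm_conjTranspose_mul_self, hQ.1.eq, hQ.2]
    nlinarith [norm_nonneg Q]
  have hdecomp : U * Q * Uᴴ - V * Q * Vᴴ = (U - V) * Q * Uᴴ + V * Q * (Uᴴ - Vᴴ) := by
    noncomm_ring
  rw [hdecomp]
  have h1 : ‖(U - V) * Q * Uᴴ‖ ≤ ‖U - V‖ := by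
    calc ‖(U - V) * Q * Uᴴ‖ ≤ ‖(U - V) * Q‖ * ‖Uᴴ‖ := Matrix.l2_opNorm_mul _ _
      _ ≤ ‖U - V‖ * ‖Q‖ * ‖Uᴴ‖ := by gcongr; exact Matrix.l2_opNorm_mul _ _
      _ ≤ ‖U - V‖ * 1 * 1 := by rw [Matrix.l2_opNorm_conjTranspose]; gcongr
      _ = ‖U - V‖ := by ring
  have h2 : ‖V * Q * (Uᴴ - Vᴴ)‖ ≤ ‖U - V‖ := by
    calc ‖V * Q * (Uᴴ - Vᴴ)‖ ≤ ‖V * Q‖ * ‖Uᴴ - Vᴴ‖ := Matrix.l2_opNorm_mul _ _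
      _ ≤ ‖V‖ * ‖Q‖ * ‖Uᴴ - Vᴴ‖ := by gcongr; exact Matrix.l2_opNorm_mul _ _
      _ ≤ 1 * 1 * ‖Uᴴ - Vᴴ‖ := by gcongr
      _ = ‖U - V‖ := by
          rw [show Uᴴ - Vᴴ = (U - V)ᴴ from (Matrix.conjTranspose_sub U V).symm,
            Matrix.l2_opNorm_conjTranspose]; ring
  calc ‖(U - V) * Q * Uᴴ + V * Q * (Uᴴ - Vᴴ)‖
      ≤ ‖(U - V) * Q * Uᴴ‖ + ‖V * Q * (Uᴴ - Vᴴ)‖ := norm_add_le _ _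
    _ ≤ 2 * ‖U - V‖ := by linarith

end Aux

/-- For a fixed projector-valued function `Π : X → L(ℂ^d)` and a set `S` of `d × d`
unitaries, the concept class `C_Π = {x ↦ U Π(x) Uᴴ : U ∈ S}` satisfies
`γ_{1,∞}(n, ε, C_Π) ≤ N_in(ε/2, S, d_op)` for all `n ≥ 1` and `ε > 0`. -/
theorem gammaCov_proj_conj_class_le_coveringNumber
    {X : Type*} (d : ℕ) (P : X → Matrix (Fin d) (Fin d) ℂ)
    (hP : ∀ x, IsProjectionMatrix (P x))
    (S : Set (Matrix (Fin d) (Fin d) ℂ))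
    (hS : ∀ U ∈ S, U ∈ Matrix.unitaryGroup (Fin d) ℂ)
    (n : ℕ) (hn : 1 ≤ n) (ε : ℝ) (hε : 0 < ε) :
    gammaCov n ε {c | ∃ U ∈ S, c = fun x => U * P x * Uᴴ} opNorm
      ≤ coveringNumber (ε / 2) S (fun U V => opNorm (U - V)) := by
  classical
  refine iSup_le fun xbar => ?_
  refine le_iInf fun A => le_iInf fun hA => ?_
  obtain ⟨hAS, hAnet⟩ := hA
  set φ : Matrix (Fin d) (Fin d) ℂ → (X → Matrix (Fin d) (Fin d) ℂ) :=
    fun U => fun x => U * P x * Uᴴ with hφ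
  have hnpos : (0 : ℝ) < n := by exact_mod_cast hn
  have hsub : ↑(A.image φ) ⊆ {c | ∃ U ∈ S, c = fun x => U * P x * Uᴴ} := by
    intro g hg
    simp only [Finset.coe_image, Set.mem_image, Finset.mem_coe] at hg
    obtain ⟨U, hU, rfl⟩ := hg
    exact ⟨U, hAS hU, rfl⟩
  have hnet : ∀ c ∈ {c | ∃ U ∈ S, c = fun x => U * P x * Uᴴ},
      ∃ a ∈ A.image φ,
        (1 / (n : ℝ)) * ∑ i, opNorm (a (xbar i) - c (xbar i)) ≤ ε := by
    rintro c ⟨U, hUS, rfl⟩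
    obtain ⟨V, hVA, hVd⟩ := hAnet U hUS
    refine ⟨φ V, Finset.mem_image_of_mem φ hVA, ?_⟩
    have hterm : ∀ i : Fin n,
        opNorm (φ V (xbar i) - U * P (xbar i) * Uᴴ) ≤ ε := by
      intro i
      calc opNorm (V * P (xbar i) * Vᴴ - U * P (xbar i) * Uᴴ)
          ≤ 2 * opNorm (V - U) :=
            opNorm_conj_sub_conj_le V U (P (xbar i)) (hS V (hAS hVA)) (hS U hUS)
              (hP (xbar i))
        _ ≤ 2 * (ε / 2) := by linarith
        _ = ε := by ring
    have hsum : ∑ i, opNorm (φ V (xbar i) - U * P (xbar i) * Uᴴ) ≤ (n : ℝ) * ε := by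
      calc ∑ i, opNorm (φ V (xbar i) - U * P (xbar i) * Uᴴ)
          ≤ ∑ _i : Fin n, ε := Finset.sum_le_sum fun i _ => hterm i
        _ = (n : ℝ) * ε := by simp [Finset.sum_const, mul_comm]
    calc (1 / (n : ℝ)) * ∑ i, opNorm (φ V (xbar i) - U * P (xbar i) * Uᴴ)
        ≤ (1 / (n : ℝ)) * ((n : ℝ) * ε) := by
          apply mul_le_mul_of_nonneg_left hsum
          positivity
      _ = ε := by field_simp
  calc coveringNumber ε {c | ∃ U ∈ S, c = fun x => U * P x * Uᴴ}
        (fun g₁ g₂ => (1 / (n : ℝ)) * ∑ i, opNorm (g₁ (xbar i) - g₂ (xbar i)))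
      ≤ ((A.image φ).card : ℕ∞) := iInf₂_le (A.image φ) ⟨hsub, hnet⟩
    _ ≤ (A.card : ℕ∞) := by exact_mod_cast Finset.card_image_le
end

section
/- Let σ_1,…,σ_m and ρ be d×d density matrices, and for each pair i < j let A_{ij} be the orthogonal projection onto the span of the eigenspaces of σ_i − σ_j with positive eigenvalues, so that Tr(σ_i A_{ij}) − Tr(σ_j A_{ij}) = d_tr(σ_i, σ_j). Set η = min_{1 ≤ k ≤ m} d_tr(σ_k, ρ). Suppose real numbers μ_{ij} (i < j) satisfy |Tr(ρ A_{ij}) − μ_{ij}| ≤ ε for all i < j, and let k* be any minimizer over k ∈ {1,…,m} of Δ_k := max_{i<j} |Tr(σ_k A_{ij}) − μ_{ij}|. Then d_tr(σ_{k*}, ρ) ≤ 3η + 2ε. -/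
open scoped BigOperators ComplexOrder Matrix Classical
open Matrix

section MatrixDefs

variable {m : Type*} [Fintype m] [DecidableEq m]

/-- Square root of a positive semidefinite matrix (junk value `0` otherwise). -/
noncomputable def matSqrt (A : Matrix m m ℂ) : Matrix m m ℂ :=
  if h : A.PosSemidef then
    (h.1.eigenvectorUnitary : Matrix m m ℂ) *
      Matrix.diagonal (fun i => ((Real.sqrt (h.1.eigenvalues i) : ℝ) : ℂ)) *
      (star h.1.eigenvectorUnitary : Matrix m m ℂ)
  else 0

/-- Trace norm `‖M‖₁ = Tr √(Mᴴ M)`. -/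
noncomputable def traceNorm (M : Matrix m m ℂ) : ℝ :=
  (matSqrt (Mᴴ * M)).trace.re

/-- Trace distance `d_tr(ρ,σ) = (1/2)‖ρ - σ‖₁`. -/
noncomputable def trDist (ρ σ : Matrix m m ℂ) : ℝ :=
  (1 / 2) * traceNorm (ρ - σ)

/-- A density matrix: positive semidefinite with unit trace. -/
def IsDensityMatrix (ρ : Matrix m m ℂ) : Prop :=
  ρ.PosSemidef ∧ ρ.trace = 1

end MatrixDefs

/-- For a Hermitian matrix `M`, the orthogonal projection onto the span of its
eigenspaces with positive eigenvalues — the Helstrom projector of `M` (junk value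
`0` if `M` is not Hermitian). -/
noncomputable def posPartProj {d : ℕ} (M : Matrix (Fin d) (Fin d) ℂ) :
    Matrix (Fin d) (Fin d) ℂ :=
  if hM : M.IsHermitian then
    (hM.eigenvectorUnitary : Matrix (Fin d) (Fin d) ℂ) *
      Matrix.diagonal (fun i => if 0 < hM.eigenvalues i then (1 : ℂ) else 0) *
      (star hM.eigenvectorUnitary : Matrix (Fin d) (Fin d) ℂ)
  else 0

section Helpers
variable {n : Type*} [Fintype n] [DecidableEq n]

lemma conj_mul_conj (U : Matrix n n ℂ) (hU : star U * U = 1) (D E : Matrix n n ℂ) :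
    (U * D * star U) * (U * E * star U) = U * (D * E) * star U := by
  calc (U * D * star U) * (U * E * star U)
      = U * D * (star U * U) * E * star U := by noncomm_ring
    _ = U * (D * E) * star U := by rw [hU]; noncomm_ring

lemma trace_conj (U : Matrix n n ℂ) (hU : star U * U = 1) (D : Matrix n n ℂ) :
    (U * D * star U).trace = D.trace := by
  rw [trace_mul_cycle, hU, one_mul]

lemma psd_conj (U : Matrix n n ℂ) (g : n → ℝ) (hg : ∀ i, 0 ≤ g i) :
    PosSemidef (U * diagonal (fun i => (g i : ℂ)) * star U) := by
  have h : PosSemidef (diagonal (fun i => (g i : ℂ))) := by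
    refine PosSemidef.diagonal fun i => show (0:ℂ) ≤ _ from ?_
    exact_mod_cast (hg i)
  exact h.mul_mul_conjTranspose_same U

lemma psd_trace_re_nonneg {R : Matrix n n ℂ} (hR : PosSemidef R) : 0 ≤ R.trace.re := by
  have h : ∀ i, 0 ≤ R i i := fun i => by
    exact hR.diag_nonneg
  rw [trace, Complex.re_sum]
  exact Finset.sum_nonneg fun i _ => ((Complex.le_def).mp (h i)).1

open scoped MatrixOrder in
lemma trace_mul_psd_re_nonneg {P Q : Matrix n n ℂ} (hP : PosSemidef P) (hQ : PosSemidef Q) :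
    0 ≤ ((P * Q).trace).re := by
  have hs : (CFC.sqrt P).PosSemidef := nonneg_iff_posSemidef.mp (CFC.sqrt_nonneg P)
  have h1 : P = CFC.sqrt P * CFC.sqrt P := (CFC.sqrt_mul_sqrt_self P hP.nonneg).symm
  have h2 : (P * Q).trace = ((CFC.sqrt P)ᴴ * Q * CFC.sqrt P).trace := by
    conv_lhs => rw [h1]
    rw [hs.1, mul_assoc, trace_mul_comm]
  rw [h2]
  exact psd_trace_re_nonneg (hQ.conjTranspose_mul_mul_same (CFC.sqrt P))

end Helpers

section Spectral
variable {n : Type*} [Fintype n] [DecidableEq n]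

lemma trace_conj_diag_mul (U : Matrix n n ℂ) (hU : star U * U = 1) (f g : n → ℝ) :
    ((U * diagonal (fun i => (f i : ℂ)) * star U) *
      (U * diagonal (fun i => (g i : ℂ)) * star U)).trace.re = ∑ i, f i * g i := by
  rw [conj_mul_conj U hU, trace_conj U hU, diagonal_mul_diagonal, trace_diagonal]
  simp [← Complex.ofReal_mul, ← Complex.ofReal_sum]

lemma trace_conj_diag (U : Matrix n n ℂ) (hU : star U * U = 1) (f : n → ℝ) :
    (U * diagonal (fun i => (f i : ℂ)) * star U).trace.re = ∑ i, f i := by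
  rw [trace_conj U hU, trace_diagonal]
  simp [← Complex.ofReal_sum]

lemma spectral' {M : Matrix n n ℂ} (hM : M.IsHermitian) :
    M = (hM.eigenvectorUnitary : Matrix n n ℂ) *
      diagonal (fun i => ((hM.eigenvalues i : ℝ) : ℂ)) *
      star (hM.eigenvectorUnitary : Matrix n n ℂ) := by
  conv_lhs => rw [hM.spectral_theorem]
  simp [Function.comp_def]

lemma matSqrt_mul_self {A : Matrix n n ℂ} (hA : A.PosSemidef) :
    matSqrt A * matSqrt A = A := by
  rw [matSqrt, dif_pos hA, conj_mul_conj _ (mem_unitaryGroup_iff'.mp (hA.1.eigenvectorUnitary).2),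
    diagonal_mul_diagonal]
  conv_rhs => rw [spectral' hA.1]
  congr 1
  congr 1
  exact congrArg diagonal (funext fun i => by
    rw [← Complex.ofReal_mul, Real.mul_self_sqrt (hA.eigenvalues_nonneg i)])

lemma matSqrt_psd {A : Matrix n n ℂ} (hA : A.PosSemidef) : (matSqrt A).PosSemidef := by
  rw [matSqrt, dif_pos hA]
  exact psd_conj _ _ (fun i => Real.sqrt_nonneg _)

open scoped MatrixOrder in
lemma eq_matSqrt {A B : Matrix n n ℂ} (hA : A.PosSemidef) (hB : B.PosSemidef) (h : B * B = A) :
    B = matSqrt A :=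
  (CFC.sqrt_unique h hB.nonneg).symm.trans
    (CFC.sqrt_unique (matSqrt_mul_self hA) (matSqrt_psd hA).nonneg)

lemma star_mul_self_eigen {M : Matrix n n ℂ} (hM : M.IsHermitian) :
    star (hM.eigenvectorUnitary : Matrix n n ℂ) * (hM.eigenvectorUnitary : Matrix n n ℂ) = 1 :=
  mem_unitaryGroup_iff'.mp (hM.eigenvectorUnitary).2

lemma mul_star_self_eigen {M : Matrix n n ℂ} (hM : M.IsHermitian) :
    (hM.eigenvectorUnitary : Matrix n n ℂ) * star (hM.eigenvectorUnitary : Matrix n n ℂ) = 1 :=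
  mem_unitaryGroup_iff.mp (hM.eigenvectorUnitary).2

lemma traceNorm_eq_sum_abs {M : Matrix n n ℂ} (hM : M.IsHermitian) :
    traceNorm M = ∑ i, |hM.eigenvalues i| := by
  set U : Matrix n n ℂ := (hM.eigenvectorUnitary : Matrix n n ℂ) with hUdef
  have hU : star U * U = 1 := star_mul_self_eigen hM
  have hspec := spectral' hM
  have hMM : Mᴴ * M = U * diagonal (fun i =>
      ((hM.eigenvalues i * hM.eigenvalues i : ℝ) : ℂ)) * star U := by
    rw [hM.eq]
    conv_lhs => rw [hspec]
    rw [conj_mul_conj U hU, diagonal_mul_diagonal]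
    congr 1
    congr 1
    exact congrArg diagonal (funext fun i => by push_cast; ring)
  have hP : PosSemidef (Mᴴ * M) := posSemidef_conjTranspose_mul_self M
  set B : Matrix n n ℂ := U * diagonal (fun i => ((|hM.eigenvalues i| : ℝ) : ℂ)) * star U
    with hBdef
  have hB : PosSemidef B := psd_conj U _ (fun i => abs_nonneg _)
  have hB2 : B ^ 2 = Mᴴ * M := by
    rw [pow_two, hBdef, conj_mul_conj U hU, diagonal_mul_diagonal, hMM]
    congr 1
    congr 1
    exact congrArg diagonal (funext fun i => by
      exact_mod_cast abs_mul_abs_self (hM.eigenvalues i))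
  have hBs : B = matSqrt (Mᴴ * M) := eq_matSqrt hP hB (by rw [← pow_two]; exact hB2)
  rw [traceNorm, ← hBs, hBdef, trace_conj_diag U hU]

lemma traceNorm_nonneg_of_hermitian {M : Matrix n n ℂ} (hM : M.IsHermitian) :
    0 ≤ traceNorm M := by
  rw [traceNorm_eq_sum_abs hM]
  exact Finset.sum_nonneg fun i _ => abs_nonneg _

lemma traceNorm_zero : traceNorm (0 : Matrix n n ℂ) = 0 := by
  have hP : PosSemidef ((0 : Matrix n n ℂ)ᴴ * 0) := posSemidef_conjTranspose_mul_self 0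
  have h0 : (0 : Matrix n n ℂ) = matSqrt ((0 : Matrix n n ℂ)ᴴ * 0) :=
    eq_matSqrt hP Matrix.PosSemidef.zero (by simp)
  rw [traceNorm, ← h0]
  simp

lemma traceNorm_neg (M : Matrix n n ℂ) : traceNorm (-M) = traceNorm M := by
  rw [traceNorm, traceNorm, conjTranspose_neg, neg_mul_neg]

lemma helstrom_bound {M A : Matrix n n ℂ} (hM : M.IsHermitian) (h0 : M.trace = 0)
    (hA : PosSemidef A) (hA1 : PosSemidef (1 - A)) :
    |((M * A).trace).re| ≤ (1 / 2) * traceNorm M := by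
  set U : Matrix n n ℂ := (hM.eigenvectorUnitary : Matrix n n ℂ) with hUdef
  have hU : star U * U = 1 := star_mul_self_eigen hM
  have hspec := spectral' hM
  set lam := hM.eigenvalues with hlam
  set Mp : Matrix n n ℂ := U * diagonal (fun i => ((max (lam i) 0 : ℝ) : ℂ)) * star U with hMp
  set Mm : Matrix n n ℂ := U * diagonal (fun i => ((max (-lam i) 0 : ℝ) : ℂ)) * star U with hMm
  have hp : PosSemidef Mp := psd_conj U _ (fun i => le_max_right _ _)
  have hm : PosSemidef Mm := psd_conj U _ (fun i => le_max_right _ _)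
  have hMsub : M = Mp - Mm := by
    conv_lhs => rw [hspec]
    rw [hMp, hMm, ← sub_mul, ← mul_sub, diagonal_sub]
    congr 1
    congr 1
    exact congrArg diagonal (funext fun i => by
      exact_mod_cast (max_zero_sub_max_neg_zero_eq_self (lam i)).symm)
  have tp : Mp.trace.re = ∑ i, max (lam i) 0 := trace_conj_diag U hU _
  have tm : Mm.trace.re = ∑ i, max (-lam i) 0 := trace_conj_diag U hU _
  have hsum0 : ∑ i, lam i = 0 := by
    have h1 : M.trace = ∑ i, ((lam i : ℝ) : ℂ) := by
      conv_lhs => rw [hspec]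
      rw [trace_conj U hU, trace_diagonal]
    rw [h0] at h1
    have := congrArg Complex.re h1.symm
    simpa [Complex.re_sum] using this
  have habs : traceNorm M = ∑ i, |lam i| := traceNorm_eq_sum_abs hM
  have hsum : Mp.trace.re + Mm.trace.re = traceNorm M := by
    rw [tp, tm, habs, ← Finset.sum_add_distrib]
    refine Finset.sum_congr rfl fun i _ => ?_
    rcases le_total (lam i) 0 with h | h
    · rw [max_eq_right h, max_eq_left (by linarith), abs_of_nonpos h]; ring
    · rw [max_eq_left h, max_eq_right (by linarith), abs_of_nonneg h]; ring
  have hdiff : Mp.trace.re - Mm.trace.re = 0 := by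
    have h2 : ∑ i, (max (lam i) 0 - max (-lam i) 0) = ∑ i, lam i :=
      Finset.sum_congr rfl fun i _ => max_zero_sub_max_neg_zero_eq_self _
    rw [tp, tm, ← Finset.sum_sub_distrib, h2, hsum0]
  have ha0 : 0 ≤ ((Mp * A).trace).re := trace_mul_psd_re_nonneg hp hA
  have hb0 : 0 ≤ ((Mm * A).trace).re := trace_mul_psd_re_nonneg hm hA
  have ha1 : ((Mp * A).trace).re ≤ Mp.trace.re := by
    have h := trace_mul_psd_re_nonneg hp hA1
    rw [mul_sub, mul_one, trace_sub, Complex.sub_re] at h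
    linarith
  have hb1 : ((Mm * A).trace).re ≤ Mm.trace.re := by
    have h := trace_mul_psd_re_nonneg hm hA1
    rw [mul_sub, mul_one, trace_sub, Complex.sub_re] at h
    linarith
  have hMA : ((M * A).trace).re = ((Mp * A).trace).re - ((Mm * A).trace).re := by
    rw [hMsub, sub_mul, trace_sub, Complex.sub_re]
  rw [abs_le, hMA]
  constructor <;> linarith

end Spectral

section PosPart
variable {d : ℕ}

lemma posPartProj_eq {M : Matrix (Fin d) (Fin d) ℂ} (hM : M.IsHermitian) :
    posPartProj M = (hM.eigenvectorUnitary : Matrix (Fin d) (Fin d) ℂ) *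
      diagonal (fun i => Complex.ofReal (if 0 < hM.eigenvalues i then (1 : ℝ) else 0)) *
      star (hM.eigenvectorUnitary : Matrix (Fin d) (Fin d) ℂ) := by
  rw [posPartProj, dif_pos hM]
  have h : (fun i => if 0 < hM.eigenvalues i then (1 : ℂ) else 0) =
      (fun i => Complex.ofReal (if 0 < hM.eigenvalues i then (1 : ℝ) else 0)) := by
    funext i; split_ifs <;> simp
  rw [h]

lemma posPartProj_psd {M : Matrix (Fin d) (Fin d) ℂ} (hM : M.IsHermitian) :
    PosSemidef (posPartProj M) := by
  rw [posPartProj_eq hM]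
  exact psd_conj _ _ (fun i => by split_ifs <;> norm_num)

lemma one_sub_posPartProj_psd {M : Matrix (Fin d) (Fin d) ℂ} (hM : M.IsHermitian) :
    PosSemidef (1 - posPartProj M) := by
  set U : Matrix (Fin d) (Fin d) ℂ := (hM.eigenvectorUnitary : Matrix (Fin d) (Fin d) ℂ)
    with hUdef
  have hU1 : U * star U = 1 := mul_star_self_eigen hM
  have hone : (1 : Matrix (Fin d) (Fin d) ℂ) =
      U * diagonal (fun _ : Fin d => Complex.ofReal 1) * star U := by
    have h : diagonal (fun _ : Fin d => Complex.ofReal 1) = 1 := by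
      rw [← diagonal_one]; norm_num
    rw [h, mul_one, hU1]
  have h2 : 1 - posPartProj M = U * diagonal
      (fun i => Complex.ofReal (1 - if 0 < hM.eigenvalues i then (1 : ℝ) else 0)) * star U := by
    rw [posPartProj_eq hM, hone, ← hUdef, ← sub_mul, ← mul_sub, diagonal_sub]
    congr 1
    congr 1
    exact congrArg diagonal (funext fun i => (Complex.ofReal_sub _ _).symm)
  rw [h2]
  exact psd_conj _ _ (fun i => by split_ifs <;> norm_num)

lemma helstrom_trace {M : Matrix (Fin d) (Fin d) ℂ} (hM : M.IsHermitian)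
    (h0 : M.trace = 0) :
    ((M * posPartProj M).trace).re = (1 / 2) * traceNorm M := by
  set U : Matrix (Fin d) (Fin d) ℂ := (hM.eigenvectorUnitary : Matrix (Fin d) (Fin d) ℂ)
    with hUdef
  have hU : star U * U = 1 := star_mul_self_eigen hM
  set lam := hM.eigenvalues with hlam
  have hspec := spectral' hM
  have hcomp : ((M * posPartProj M).trace).re =
      ∑ i, lam i * (if 0 < lam i then (1 : ℝ) else 0) := by
    have h1 : M * posPartProj M = ((hM.eigenvectorUnitary : Matrix (Fin d) (Fin d) ℂ) *
        diagonal (fun i => ((hM.eigenvalues i : ℝ) : ℂ)) *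
        star (hM.eigenvectorUnitary : Matrix (Fin d) (Fin d) ℂ)) * posPartProj M :=
      congrArg (· * posPartProj M) (spectral' hM)
    rw [h1, posPartProj_eq hM]
    exact trace_conj_diag_mul _ (star_mul_self_eigen hM) _ _
  have hsum0 : ∑ i, lam i = 0 := by
    have h1 : M.trace = ∑ i, ((lam i : ℝ) : ℂ) := by
      conv_lhs => rw [hspec]
      rw [trace_conj U hU, trace_diagonal]
    rw [h0] at h1
    have := congrArg Complex.re h1.symm
    simpa [Complex.re_sum] using this
  have habs : traceNorm M = ∑ i, |lam i| := traceNorm_eq_sum_abs hM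
  have hpt : ∀ i, lam i * (if 0 < lam i then (1 : ℝ) else 0) = (|lam i| + lam i) / 2 := by
    intro i
    split_ifs with h
    · rw [abs_of_pos h]; ring
    · rw [abs_of_nonpos (le_of_not_gt h)]; ring
  rw [hcomp, Finset.sum_congr rfl (fun i _ => hpt i), ← Finset.sum_div,
    Finset.sum_add_distrib, hsum0, ← habs]
  ring

end PosPart

section Density
variable {d : ℕ}

lemma density_diff_herm {X Y : Matrix (Fin d) (Fin d) ℂ}
    (hX : IsDensityMatrix X) (hY : IsDensityMatrix Y) : (X - Y).IsHermitian :=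
  hX.1.1.sub hY.1.1

lemma density_diff_trace {X Y : Matrix (Fin d) (Fin d) ℂ}
    (hX : IsDensityMatrix X) (hY : IsDensityMatrix Y) : (X - Y).trace = 0 := by
  rw [trace_sub, hX.2, hY.2, sub_self]

lemma trDist_nonneg {X Y : Matrix (Fin d) (Fin d) ℂ}
    (hX : IsDensityMatrix X) (hY : IsDensityMatrix Y) : 0 ≤ trDist X Y := by
  have := traceNorm_nonneg_of_hermitian (density_diff_herm hX hY)
  rw [trDist]; linarith

lemma trDist_symm (X Y : Matrix (Fin d) (Fin d) ℂ) : trDist X Y = trDist Y X := by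
  rw [trDist, trDist, ← neg_sub X Y, traceNorm_neg]

lemma trDist_helstrom {X Y : Matrix (Fin d) (Fin d) ℂ}
    (hX : IsDensityMatrix X) (hY : IsDensityMatrix Y) :
    (((X - Y) * posPartProj (X - Y)).trace).re = trDist X Y :=
  helstrom_trace (density_diff_herm hX hY) (density_diff_trace hX hY)

lemma dist_bound {X Y A : Matrix (Fin d) (Fin d) ℂ}
    (hX : IsDensityMatrix X) (hY : IsDensityMatrix Y)
    (hA : PosSemidef A) (hA1 : PosSemidef (1 - A)) :
    |((X * A).trace).re - ((Y * A).trace).re| ≤ trDist X Y := by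
  have h := helstrom_bound (density_diff_herm hX hY) (density_diff_trace hX hY) hA hA1
  rw [sub_mul, trace_sub, Complex.sub_re] at h
  rw [trDist]
  exact h

end Density

/-- **Quantum hypothesis selection via Helstrom projectors.**  Let `σ₁,…,σ_m` and
`ρ` be `d × d` density matrices and, for each pair `i < j`, let
`A_{ij} = posPartProj (σᵢ - σⱼ)` (so `Tr(σᵢ A_{ij}) - Tr(σⱼ A_{ij}) = d_tr(σᵢ,σⱼ)`).
Set `η = min_k d_tr(σ_k, ρ)`.  If real numbers `μ_{ij}` satisfy
`|Tr(ρ A_{ij}) - μ_{ij}| ≤ ε` for all `i < j`, and `k*` minimizes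
`Δ_k = max_{i<j} |Tr(σ_k A_{ij}) - μ_{ij}|`, then `d_tr(σ_{k*}, ρ) ≤ 3η + 2ε`. -/
theorem hypothesis_selection (d m : ℕ)
    (σ : Fin m → Matrix (Fin d) (Fin d) ℂ) (ρ : Matrix (Fin d) (Fin d) ℂ)
    (hσ : ∀ k, IsDensityMatrix (σ k)) (hρ : IsDensityMatrix ρ)
    (μ : Fin m → Fin m → ℝ) (ε η : ℝ) (hε : 0 ≤ ε)
    (hμ : ∀ i j : Fin m, i < j →
      |((ρ * posPartProj (σ i - σ j)).trace).re - μ i j| ≤ ε)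
    (hη : IsLeast {r : ℝ | ∃ k : Fin m, r = trDist (σ k) ρ} η)
    (Δ : Fin m → ℝ)
    (hΔ : ∀ k, Δ k = sSup {r : ℝ | ∃ i j : Fin m, i < j ∧
      r = |((σ k * posPartProj (σ i - σ j)).trace).re - μ i j|})
    (kstar : Fin m) (hkstar : ∀ k, Δ kstar ≤ Δ k) :
    trDist (σ kstar) ρ ≤ 3 * η + 2 * ε := by
  obtain ⟨k0, hk0⟩ := hη.1
  have hηle : ∀ k, η ≤ trDist (σ k) ρ := fun k => hη.2 ⟨k, rfl⟩
  have hη0 : 0 ≤ η := hk0 ▸ trDist_nonneg (hσ k0) hρ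
  have hherm : ∀ i j : Fin m, (σ i - σ j).IsHermitian :=
    fun i j => density_diff_herm (hσ i) (hσ j)
  have hApsd : ∀ i j : Fin m, PosSemidef (posPartProj (σ i - σ j)) :=
    fun i j => posPartProj_psd (hherm i j)
  have hApsd1 : ∀ i j : Fin m, PosSemidef (1 - posPartProj (σ i - σ j)) :=
    fun i j => one_sub_posPartProj_psd (hherm i j)
  have bound_elem : ∀ (k i j : Fin m), i < j →
      |((σ k * posPartProj (σ i - σ j)).trace).re - μ i j| ≤ trDist (σ k) ρ + ε := by
    intro k i j hij
    have h1 := dist_bound (hσ k) hρ (hApsd i j) (hApsd1 i j)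
    have h2 := hμ i j hij
    calc |((σ k * posPartProj (σ i - σ j)).trace).re - μ i j|
        ≤ |((σ k * posPartProj (σ i - σ j)).trace).re -
            ((ρ * posPartProj (σ i - σ j)).trace).re| +
          |((ρ * posPartProj (σ i - σ j)).trace).re - μ i j| := abs_sub_le _ _ _
      _ ≤ trDist (σ k) ρ + ε := add_le_add h1 h2
  have hΔle : ∀ k, Δ k ≤ trDist (σ k) ρ + ε := by
    intro k
    rw [hΔ k]
    refine Real.sSup_le ?_ (by have := trDist_nonneg (hσ k) hρ; linarith)
    rintro r ⟨i, j, hij, rfl⟩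
    exact bound_elem k i j hij
  have hmem : ∀ (k i j : Fin m), i < j →
      |((σ k * posPartProj (σ i - σ j)).trace).re - μ i j| ≤ Δ k := by
    intro k i j hij
    rw [hΔ k]
    refine le_csSup ⟨trDist (σ k) ρ + ε, ?_⟩ ⟨i, j, hij, rfl⟩
    rintro r ⟨i', j', hij', rfl⟩
    exact bound_elem k i' j' hij'
  have hΔstar : Δ kstar ≤ η + ε := by
    have := hΔle k0
    rw [← hk0] at this
    exact (hkstar k0).trans this
  have hΔk0 : Δ k0 ≤ η + ε := by
    have := hΔle k0
    rw [← hk0] at this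
    exact this
  -- trace distance between σ kstar and σ k0
  have hdks : trDist (σ kstar) (σ k0) ≤ 2 * η + 2 * ε := by
    rcases lt_trichotomy kstar k0 with h | h | h
    · -- kstar < k0
      have hd := trDist_helstrom (hσ kstar) (hσ k0)
      set A := posPartProj (σ kstar - σ k0) with hA
      have h1 := hmem kstar kstar k0 h
      have h2 := hmem k0 kstar k0 h
      have hsplit : (((σ kstar - σ k0) * A).trace).re =
          ((σ kstar * A).trace).re - ((σ k0 * A).trace).re := by
        rw [sub_mul, trace_sub, Complex.sub_re]
      rw [hsplit] at hd
      rw [← hd]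
      have := abs_le.mp h1
      have := abs_le.mp h2
      rcases abs_le.mp h1 with ⟨h1l, h1r⟩
      rcases abs_le.mp h2 with ⟨h2l, h2r⟩
      linarith
    · rw [h]
      rw [show trDist (σ k0) (σ k0) = 0 by rw [trDist, sub_self, traceNorm_zero, mul_zero]]
      linarith
    · -- k0 < kstar
      have hd := trDist_helstrom (hσ k0) (hσ kstar)
      set A := posPartProj (σ k0 - σ kstar) with hA
      have h1 := hmem kstar k0 kstar h
      have h2 := hmem k0 k0 kstar h
      have hsplit : (((σ k0 - σ kstar) * A).trace).re =
          ((σ k0 * A).trace).re - ((σ kstar * A).trace).re := by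
        rw [sub_mul, trace_sub, Complex.sub_re]
      rw [hsplit] at hd
      rw [trDist_symm, ← hd]
      rcases abs_le.mp h1 with ⟨h1l, h1r⟩
      rcases abs_le.mp h2 with ⟨h2l, h2r⟩
      linarith
  -- final triangle via Helstrom projector of σ kstar - ρ
  set B := posPartProj (σ kstar - ρ) with hB
  have hBpsd : PosSemidef B := posPartProj_psd (density_diff_herm (hσ kstar) hρ)
  have hBpsd1 : PosSemidef (1 - B) := one_sub_posPartProj_psd (density_diff_herm (hσ kstar) hρ)
  have hfin : trDist (σ kstar) ρ =
      ((σ kstar * B).trace).re - ((ρ * B).trace).re := by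
    have hd := trDist_helstrom (hσ kstar) hρ
    rw [← hd, sub_mul, trace_sub, Complex.sub_re]
  have t1 : |((σ kstar * B).trace).re - ((σ k0 * B).trace).re| ≤ trDist (σ kstar) (σ k0) :=
    dist_bound (hσ kstar) (hσ k0) hBpsd hBpsd1
  have t2 : |((σ k0 * B).trace).re - ((ρ * B).trace).re| ≤ trDist (σ k0) ρ :=
    dist_bound (hσ k0) hρ hBpsd hBpsd1
  rcases abs_le.mp t1 with ⟨t1l, t1r⟩
  rcases abs_le.mp t2 with ⟨t2l, t2r⟩
  rw [hfin]
  have hk0d : trDist (σ k0) ρ = η := hk0.symm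
  linarith
end
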